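/- Let n be an odd natural number with n ≥ 3. Then every finite simple graph G on n vertices whose adjacency matrix over ℝ is invertible has at least (n+3)/2 edges, and there exists a simple graph on n vertices with exactly (n+3)/2 edges whose adjacency matrix over ℝ is invertible (a triangle together with (n-3)/2 disjoint edges). -/

import Mathlib

attribute [local instance] Classical.propDecidable

/-- "Partner" function: for k ≥ 3, pairs 3↔4, 5↔6, ... -/
def prN (k : ℕ) : ℕ := if k % 2 = 1 then k + 1 else k - 1

lemma prN_ge (k : ℕ) (hk : 3 ≤ k) : 3 ≤ prN k := by
  unfold prN; split <;> omega

lemma prN_invol (k : ℕ) (hk : 3 ≤ k) : prN (prN k) = k := by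
  unfold prN; rcases Nat.even_or_odd k with h | h
  · have h1 : k % 2 = 0 := Nat.even_iff.mp h
    have h2 : (k - 1) % 2 = 1 := by omega
    simp [h1, h2]; omega
  · have h1 : k % 2 = 1 := Nat.odd_iff.mp h
    have h2 : (k + 1) % 2 = 0 := by omega
    simp [h1, h2]

lemma prN_ne (k : ℕ) (hk : 3 ≤ k) : prN k ≠ k := by
  unfold prN; split <;> omega

/-- The graph: triangle on {0,1,2} plus perfect matching on the rest. -/
def triMatch (n : ℕ) : SimpleGraph (Fin n) where
  Adj i j := i ≠ j ∧ ((i.val < 3 ∧ j.val < 3) ∨ (3 ≤ i.val ∧ 3 ≤ j.val ∧ j.val = prN i.val))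
  symm := by
    constructor
    rintro i j ⟨hne, h | ⟨hi, hj, hp⟩⟩
    · exact ⟨hne.symm, Or.inl ⟨h.2, h.1⟩⟩
    · refine ⟨hne.symm, Or.inr ⟨hj, hi, ?_⟩⟩
      rw [hp, prN_invol i.val hi]
  loopless := by constructor; rintro i ⟨hne, -⟩; exact hne rfl

lemma prN_lt (n : ℕ) (hodd : Odd n) (j : Fin n) (hj : 3 ≤ j.val) : prN j.val < n := by
  have hjn : j.val < n := j.isLt
  rcases hodd with ⟨m, hm⟩
  unfold prN; split <;> omega

lemma neighborFinset_matching (n : ℕ) (hodd : Odd n) (j : Fin n) (hj : 3 ≤ j.val) :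
    (triMatch n).neighborFinset j = {⟨prN j.val, prN_lt n hodd j hj⟩} := by
  ext w
  simp only [SimpleGraph.mem_neighborFinset, Finset.mem_singleton]
  constructor
  · rintro ⟨hne, h | ⟨_, _, hp⟩⟩
    · omega
    · exact Fin.ext hp
  · rintro rfl
    refine ⟨?_, Or.inr ⟨hj, prN_ge _ hj, rfl⟩⟩
    intro h
    exact prN_ne j.val hj (congrArg Fin.val h.symm)

lemma mem_triple_iff (n : ℕ) (hn : 3 ≤ n) (w : Fin n) :
    w ∈ ({⟨0, by omega⟩, ⟨1, by omega⟩, ⟨2, by omega⟩} : Finset (Fin n)) ↔ w.val < 3 := by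
  simp only [Finset.mem_insert, Finset.mem_singleton, Fin.ext_iff]
  omega

lemma neighborFinset_triangle (n : ℕ) (hn : 3 ≤ n) (j : Fin n) (hj : j.val < 3) :
    (triMatch n).neighborFinset j =
      ({⟨0, by omega⟩, ⟨1, by omega⟩, ⟨2, by omega⟩} : Finset (Fin n)).erase j := by
  ext w
  simp only [SimpleGraph.mem_neighborFinset, Finset.mem_erase]
  rw [mem_triple_iff n hn]
  constructor
  · rintro ⟨hne, h | ⟨hi, -, -⟩⟩
    · exact ⟨hne.symm, h.2⟩
    · omega
  · rintro ⟨hne, hw⟩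
    exact ⟨hne.symm, Or.inl ⟨hj, hw⟩⟩

lemma triple_card (n : ℕ) (hn : 3 ≤ n) :
    ({⟨0, by omega⟩, ⟨1, by omega⟩, ⟨2, by omega⟩} : Finset (Fin n)).card = 3 := by
  rw [Finset.card_insert_of_notMem, Finset.card_insert_of_notMem, Finset.card_singleton]
  · simp [Fin.ext_iff]
  · simp [Fin.ext_iff]

lemma triMatch_degree (n : ℕ) (hn : 3 ≤ n) (hodd : Odd n) (j : Fin n) :
    (triMatch n).degree j = if j.val < 3 then 2 else 1 := by
  rw [SimpleGraph.degree]
  split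
  · rename_i hj
    rw [neighborFinset_triangle n hn j hj, Finset.card_erase_of_mem, triple_card n hn]
    rw [mem_triple_iff n hn]; exact hj
  · rename_i hj
    rw [neighborFinset_matching n hodd j (by omega)]
    exact Finset.card_singleton _

lemma triMatch_card (n : ℕ) (hn : 3 ≤ n) (hodd : Odd n) :
    (triMatch n).edgeFinset.card = (n + 3) / 2 := by
  have h2 := (triMatch n).sum_degrees_eq_twice_card_edges
  have hsum : ∑ v : Fin n, (triMatch n).degree v = n + 3 := by
    calc ∑ v : Fin n, (triMatch n).degree v
        = ∑ v : Fin n, (if v.val < 3 then 2 else 1) :=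
          Finset.sum_congr rfl fun v _ => triMatch_degree n hn hodd v
      _ = ∑ v : Fin n, ((if v.val < 3 then 1 else 0) + 1) := by
          apply Finset.sum_congr rfl; intro v _; split <;> rfl
      _ = (Finset.univ.filter fun v : Fin n => v.val < 3).card + n := by
          rw [Finset.sum_add_distrib, Finset.sum_boole]
          simp
      _ = n + 3 := by
          have h3 : (Finset.univ.filter fun v : Fin n => v.val < 3)
              = ({⟨0, by omega⟩, ⟨1, by omega⟩, ⟨2, by omega⟩} : Finset (Fin n)) := by
            ext w
            rw [mem_triple_iff n hn, Finset.mem_filter]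
            simp
          rw [h3, triple_card n hn]; omega
  omega

lemma triMatch_isUnit (n : ℕ) (hn : 3 ≤ n) (hodd : Odd n) :
    IsUnit ((triMatch n).adjMatrix ℝ) := by
  rw [Matrix.isUnit_iff_isUnit_det, isUnit_iff_ne_zero]
  intro hdet
  obtain ⟨x, hx0, hx⟩ := (Matrix.exists_mulVec_eq_zero_iff).mpr hdet
  have hmatch : ∀ j : Fin n, 3 ≤ j.val → x j = 0 := by
    intro j hj
    have hp : 3 ≤ prN j.val := prN_ge _ hj
    have h1 : ((triMatch n).adjMatrix ℝ).mulVec x ⟨prN j.val, prN_lt n hodd j hj⟩ = 0 :=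
      congrFun hx _
    rw [SimpleGraph.adjMatrix_mulVec_apply,
        neighborFinset_matching n hodd ⟨prN j.val, prN_lt n hodd j hj⟩ hp,
        Finset.sum_singleton] at h1
    convert h1 using 2
    exact Fin.ext (by simpa using (prN_invol j.val hj).symm)
  set a : Fin n := ⟨0, by omega⟩ with ha
  set b : Fin n := ⟨1, by omega⟩ with hb
  set c : Fin n := ⟨2, by omega⟩ with hc
  have hab : a ≠ b := by simp [ha, hb, Fin.ext_iff]
  have hac : a ≠ c := by simp [ha, hc, Fin.ext_iff]
  have hbc : b ≠ c := by simp [hb, hc, Fin.ext_iff]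
  have key : ∀ j : Fin n, j.val < 3 →
      ∑ u ∈ (({a, b, c} : Finset (Fin n)).erase j), x u = 0 := by
    intro j hj
    have h1 : ((triMatch n).adjMatrix ℝ).mulVec x j = 0 := congrFun hx _
    rwa [SimpleGraph.adjMatrix_mulVec_apply, neighborFinset_triangle n hn j hj] at h1
  have ea : (({a, b, c} : Finset (Fin n)).erase a) = {b, c} :=
    Finset.erase_insert (by simp [Finset.mem_insert, hab, hac])
  have eb : (({a, b, c} : Finset (Fin n)).erase b) = {a, c} := by
    rw [Finset.erase_insert_of_ne hab, Finset.erase_insert (by simp [hbc])]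
  have ec : (({a, b, c} : Finset (Fin n)).erase c) = {a, b} := by
    rw [Finset.erase_insert_of_ne hac, Finset.erase_insert_of_ne hbc,
      Finset.erase_singleton]
    simp
  have e1 := key a (by simp [ha])
  have e2 := key b (by simp [hb])
  have e3 := key c (by simp [hc])
  rw [ea, Finset.sum_pair hbc] at e1
  rw [eb, Finset.sum_pair hac] at e2
  rw [ec, Finset.sum_pair hab] at e3
  have hxa : x a = 0 := by linarith
  have hxb : x b = 0 := by linarith
  have hxc : x c = 0 := by linarith
  apply hx0
  funext j
  by_cases hj : j.val < 3
  · interval_cases h : j.val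
    · rwa [show j = a from Fin.ext h]
    · rwa [show j = b from Fin.ext h]
    · rwa [show j = c from Fin.ext h]
  · exact hmatch j (by omega)

theorem min_edges_nonsingular_odd (n : ℕ) (hn : 3 ≤ n) (hodd : Odd n) :
    (∀ G : SimpleGraph (Fin n), IsUnit (G.adjMatrix ℝ) → (n + 3) / 2 ≤ G.edgeFinset.card) ∧
    (∃ G : SimpleGraph (Fin n), G.edgeFinset.card = (n + 3) / 2 ∧ IsUnit (G.adjMatrix ℝ)) := by
  refine ⟨?_, triMatch n, triMatch_card n hn hodd, triMatch_isUnit n hn hodd⟩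
  intro G hU
  by_contra hlt
  push_neg at hlt
  have hdet : IsUnit ((G.adjMatrix ℝ).det) := (Matrix.isUnit_iff_isUnit_det _).mp hU
  -- every vertex has degree ≥ 1
  have hdeg1 : ∀ v : Fin n, 1 ≤ G.degree v := by
    intro v
    by_contra h
    have h0 : ∀ w, ¬ G.Adj v w := by
      intro w hadj
      have hw : w ∈ G.neighborFinset v := by
        rw [SimpleGraph.mem_neighborFinset]; exact hadj
      exact h (Finset.card_pos.mpr ⟨w, hw⟩)
    have hrow : (G.adjMatrix ℝ) v = 0 := by
      funext w
      simp [SimpleGraph.adjMatrix_apply, h0 w]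
    have := Matrix.det_eq_zero_of_row_eq_zero v (fun j => congrFun hrow j)
    rw [this] at hdet
    exact (not_isUnit_zero hdet).elim
  have hsum := G.sum_degrees_eq_twice_card_edges
  have hsumge : n ≤ ∑ v : Fin n, G.degree v := by
    calc n = ∑ _v : Fin n, 1 := by simp
      _ ≤ ∑ v : Fin n, G.degree v := Finset.sum_le_sum fun v _ => hdeg1 v
  -- so 2 * card = n + 1
  have hcard : 2 * G.edgeFinset.card = n + 1 := by
    rcases hodd with ⟨m, hm⟩
    omega
  -- some vertex of degree ≥ 2
  have hv2 : ∃ v : Fin n, 2 ≤ G.degree v := by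
    by_contra h
    push_neg at h
    have : ∑ v : Fin n, G.degree v ≤ ∑ _v : Fin n, 1 :=
      Finset.sum_le_sum fun v _ => by have := h v; omega
    simp at this
    omega
  obtain ⟨v, hv⟩ := hv2
  -- all other vertices have degree exactly 1
  have hother : ∀ w : Fin n, w ≠ v → G.degree w = 1 := by
    intro w hw
    have hsplit : ∑ u : Fin n, G.degree u
        = G.degree v + G.degree w + ∑ u ∈ (Finset.univ.erase v).erase w, G.degree u := by
      rw [← Finset.add_sum_erase _ _ (Finset.mem_univ v),
        ← Finset.add_sum_erase _ _ (Finset.mem_erase.mpr ⟨hw, Finset.mem_univ w⟩)]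
      ring
    have hrest : ((Finset.univ.erase v).erase w).card
        ≤ ∑ u ∈ (Finset.univ.erase v).erase w, G.degree u := by
      calc ((Finset.univ.erase v).erase w).card
          = ∑ _u ∈ (Finset.univ.erase v).erase w, 1 := by simp
        _ ≤ _ := Finset.sum_le_sum fun u _ => hdeg1 u
    have hcard2 : ((Finset.univ.erase v).erase w).card = n - 2 := by
      rw [Finset.card_erase_of_mem (Finset.mem_erase.mpr ⟨hw, Finset.mem_univ w⟩),
        Finset.card_erase_of_mem (Finset.mem_univ v)]
      simp only [Finset.card_univ, Fintype.card_fin]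
      omega
    have := hdeg1 w
    omega
  -- v has two distinct neighbors a b; each has neighborhood exactly {v}
  obtain ⟨a, ha, b, hb, hab⟩ := Finset.one_lt_card.mp (show 1 < G.degree v by omega)
  have hnbr : ∀ u : Fin n, u ∈ G.neighborFinset v → G.neighborFinset u = {v} := by
    intro u hu
    have huv : u ≠ v := by
      have hadj : G.Adj v u := by rwa [SimpleGraph.mem_neighborFinset] at hu
      exact (G.ne_of_adj hadj.symm)
    have hdu : G.degree u = 1 := hother u huv
    obtain ⟨z, hz⟩ := Finset.card_eq_one.mp hdu
    have hadj : G.Adj v u := by rwa [SimpleGraph.mem_neighborFinset] at hu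
    have hvz : v ∈ G.neighborFinset u := by
      rw [SimpleGraph.mem_neighborFinset]
      exact hadj.symm
    rw [hz] at hvz ⊢
    rw [Finset.mem_singleton] at hvz
    rw [hvz]
  -- rows a and b of the adjacency matrix coincide
  have hrows : (G.adjMatrix ℝ) a = (G.adjMatrix ℝ) b := by
    funext w
    have haw : G.Adj a w ↔ w = v := by
      rw [← SimpleGraph.mem_neighborFinset, hnbr a ha, Finset.mem_singleton]
    have hbw : G.Adj b w ↔ w = v := by
      rw [← SimpleGraph.mem_neighborFinset, hnbr b hb, Finset.mem_singleton]
    simp only [SimpleGraph.adjMatrix_apply]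
    by_cases hwv : w = v
    · rw [if_pos (haw.mpr hwv), if_pos (hbw.mpr hwv)]
    · rw [if_neg (fun h => hwv (haw.mp h)), if_neg (fun h => hwv (hbw.mp h))]
  have := Matrix.det_zero_of_row_eq hab hrows
  rw [this] at hdet
  exact (not_isUnit_zero hdet).elim
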